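/- arXiv:2109.01974 — 2 statements merged into one kernel-verified Lean document; each statement's English description precedes it below -/
import Mathlib

section
/- For every k ≥ 0, with J̄_k := J*⁻¹(J_k − J*), Broyden's 'good' update satisfies σ_{k+1}² ≤ σ_k² − ‖J*⁻¹(J_k − B_k)u_k‖²/‖u_k‖² + 2(σ_k‖J̄_k‖ + ‖J̄_k‖²). -/
open Matrix MeasureTheory

noncomputable def specNorm {n : ℕ} (A : Matrix (Fin n) (Fin n) ℝ) : ℝ :=
  ‖Matrix.toEuclideanCLM (𝕜 := ℝ) A‖

noncomputable def frobNorm {n : ℕ} (A : Matrix (Fin n) (Fin n) ℝ) : ℝ :=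
  Real.sqrt (∑ i, ∑ j, (A i j) ^ 2)

noncomputable def vnorm {n : ℕ} (x : Fin n → ℝ) : ℝ :=
  Real.sqrt (∑ i, (x i) ^ 2)

noncomputable def intJac {n : ℕ} (J : (Fin n → ℝ) → Matrix (Fin n) (Fin n) ℝ)
    (x u : Fin n → ℝ) : Matrix (Fin n) (Fin n) ℝ :=
  Matrix.of fun i j => ∫ t in (0:ℝ)..(1:ℝ), J (x + t • u) i j

section Helpers
variable {n : ℕ}

lemma vnorm_nonneg (x : Fin n → ℝ) : 0 ≤ vnorm x := Real.sqrt_nonneg _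

lemma vnorm_sq (x : Fin n → ℝ) : vnorm x ^ 2 = ∑ i, x i ^ 2 := by
  rw [vnorm, Real.sq_sqrt]; positivity

lemma frobNorm_nonneg (A : Matrix (Fin n) (Fin n) ℝ) : 0 ≤ frobNorm A := Real.sqrt_nonneg _

lemma frobNorm_sq (A : Matrix (Fin n) (Fin n) ℝ) : frobNorm A ^ 2 = ∑ i, ∑ j, A i j ^ 2 := by
  rw [frobNorm, Real.sq_sqrt]; positivity

lemma specNorm_nonneg (A : Matrix (Fin n) (Fin n) ℝ) : 0 ≤ specNorm A := norm_nonneg _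

lemma dot_abs_le (v w : Fin n → ℝ) : |∑ i, v i * w i| ≤ vnorm v * vnorm w := by
  rw [← Real.sqrt_sq_eq_abs, vnorm, vnorm, ← Real.sqrt_mul (by positivity)]
  exact Real.sqrt_le_sqrt (Finset.sum_mul_sq_le_sq_mul_sq _ _ _)

lemma vnorm_mulVec_le_frob (A : Matrix (Fin n) (Fin n) ℝ) (u : Fin n → ℝ) :
    vnorm (A *ᵥ u) ≤ frobNorm A * vnorm u := by
  rw [vnorm, frobNorm, vnorm, ← Real.sqrt_mul (by positivity)]
  apply Real.sqrt_le_sqrt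
  rw [Finset.sum_mul]
  refine Finset.sum_le_sum fun i _ => ?_
  simpa [Matrix.mulVec, dotProduct] using
    Finset.sum_mul_sq_le_sq_mul_sq Finset.univ (A i) u

lemma vnorm_mulVec_le_spec (A : Matrix (Fin n) (Fin n) ℝ) (u : Fin n → ℝ) :
    vnorm (A *ᵥ u) ≤ specNorm A * vnorm u := by
  have h1 : ∀ (w : Fin n → ℝ), ‖(WithLp.equiv 2 (Fin n → ℝ)).symm w‖ = vnorm w := by
    intro w
    rw [EuclideanSpace.norm_eq]
    simp [vnorm, sq_abs]
  have h2 := (Matrix.toEuclideanCLM (𝕜 := ℝ) A).le_opNorm ((WithLp.equiv 2 (Fin n → ℝ)).symm u)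
  have h3 : (Matrix.toEuclideanCLM (𝕜 := ℝ) A) ((WithLp.equiv 2 (Fin n → ℝ)).symm u)
      = (WithLp.equiv 2 (Fin n → ℝ)).symm (A *ᵥ u) := rfl
  rwa [h3, h1, h1] at h2

lemma mul_vecMulVec (A : Matrix (Fin n) (Fin n) ℝ) (w v : Fin n → ℝ) :
    A * vecMulVec w v = vecMulVec (A *ᵥ w) v := by
  ext i j
  simp [Matrix.mul_apply, vecMulVec_apply, mulVec, dotProduct, Finset.sum_mul, mul_assoc]

end Helpers
lemma ftc_line {n : ℕ} (F : (Fin n → ℝ) → (Fin n → ℝ))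
    (J : (Fin n → ℝ) → Matrix (Fin n) (Fin n) ℝ)
    (hF : ∀ z, HasFDerivAt F (LinearMap.toContinuousLinearMap ((J z).mulVecLin)) z)
    (hJc : Continuous J) (x u : Fin n → ℝ) :
    F (x + u) - F x = intJac J x u *ᵥ u := by
  have hlinec : Continuous fun t : ℝ => x + t • u :=
    continuous_const.add (continuous_id.smul continuous_const)
  have hline : ∀ t : ℝ, HasDerivAt (fun t : ℝ => F (x + t • u)) (J (x + t • u) *ᵥ u) t := by
    intro t
    have h1 : HasDerivAt (fun t : ℝ => x + t • u) u t := by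
      simpa using ((hasDerivAt_id t).smul_const u).const_add x
    have h2 := (hF (x + t • u)).comp_hasDerivAt t h1
    simpa [Function.comp_def] using h2
  have hcomp : ∀ (i : Fin n) (t : ℝ),
      HasDerivAt (fun t : ℝ => F (x + t • u) i) ((J (x + t • u) *ᵥ u) i) t :=
    fun i t => hasDerivAt_pi.mp (hline t) i
  have hentry : ∀ i j, Continuous fun t : ℝ => J (x + t • u) i j :=
    fun i j => (continuous_apply j).comp ((continuous_apply i).comp (hJc.comp hlinec))
  have hcont : ∀ i, Continuous fun t : ℝ => (J (x + t • u) *ᵥ u) i := by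
    intro i
    show Continuous fun t : ℝ => ∑ j, J (x + t • u) i j * u j
    exact continuous_finset_sum _ fun j _ => (hentry i j).mul continuous_const
  have hFTC : ∀ i, F (x + u) i - F x i = ∫ t in (0:ℝ)..1, (J (x + t • u) *ᵥ u) i := by
    intro i
    have h := intervalIntegral.integral_eq_sub_of_hasDerivAt
      (f := fun t : ℝ => F (x + t • u) i)
      (fun t _ => hcomp i t) ((hcont i).intervalIntegrable 0 1)
    rw [h]
    norm_num
  funext i
  show F (x + u) i - F x i = ∑ j, intJac J x u i j * u j
  rw [hFTC i]
  have hmv : ∀ t : ℝ, (J (x + t • u) *ᵥ u) i = ∑ j, J (x + t • u) i j * u j := fun t => rfl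
  simp_rw [hmv]
  rw [intervalIntegral.integral_finset_sum (f := fun j t => J (x + t • u) i j * u j)
    (fun j _ => ((hentry i j).mul continuous_const).intervalIntegrable 0 1)]
  exact Finset.sum_congr rfl fun j _ => intervalIntegral.integral_mul_const _ _

/-- One-step Frobenius-measure inequality for Broyden's "good" update:
`σ_{k+1}² ≤ σ_k² − ‖J*⁻¹(J_k − B_k)u_k‖²/‖u_k‖² + 2(σ_k‖J̄_k‖ + ‖J̄_k‖²)`. -/
theorem stmt3 {n : ℕ} (F : (Fin n → ℝ) → (Fin n → ℝ))
    (J : (Fin n → ℝ) → Matrix (Fin n) (Fin n) ℝ)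
    (hF : ∀ z, HasFDerivAt F (LinearMap.toContinuousLinearMap ((J z).mulVecLin)) z)
    (hJc : Continuous J)
    (xs : Fin n → ℝ) (hxs : F xs = 0) (hJs : IsUnit (J xs).det)
    (x : ℕ → Fin n → ℝ) (B : ℕ → Matrix (Fin n) (Fin n) ℝ)
    (hBk : ∀ k, IsUnit (B k).det) (hFk : ∀ k, F (x k) ≠ 0)
    (hx : ∀ k, x (k + 1) = x k - (B k)⁻¹ *ᵥ F (x k))
    (hB : ∀ k, B (k + 1) = B k + ((x (k + 1) - x k) ⬝ᵥ (x (k + 1) - x k))⁻¹ •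
        vecMulVec (F (x (k + 1)) - F (x k) - B k *ᵥ (x (k + 1) - x k)) (x (k + 1) - x k)) :
    ∀ k : ℕ,
      frobNorm ((J xs)⁻¹ * (B (k + 1) - J xs)) ^ 2 ≤
        frobNorm ((J xs)⁻¹ * (B k - J xs)) ^ 2
          - vnorm ((J xs)⁻¹ *ᵥ ((intJac J (x k) (x (k + 1) - x k) - B k) *ᵥ (x (k + 1) - x k))) ^ 2
              / vnorm (x (k + 1) - x k) ^ 2
          + 2 * (frobNorm ((J xs)⁻¹ * (B k - J xs)) *
                specNorm ((J xs)⁻¹ * (intJac J (x k) (x (k + 1) - x k) - J xs))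
              + specNorm ((J xs)⁻¹ * (intJac J (x k) (x (k + 1) - x k) - J xs)) ^ 2) := by
  intro k
  set A := (J xs)⁻¹ with hA
  set u : Fin n → ℝ := x (k + 1) - x k with hu
  set Jk := intJac J (x k) u with hJkdef
  -- u ≠ 0
  have hu0 : u ≠ 0 := by
    intro h0
    apply hFk k
    have h1 : (B k)⁻¹ *ᵥ F (x k) = 0 := by
      have h2 : u = -((B k)⁻¹ *ᵥ F (x k)) := by
        rw [hu, hx k]; abel
      rw [h0] at h2
      simpa using h2.symm
    have h2 := congrArg (fun v => B k *ᵥ v) h1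
    simpa [Matrix.mulVec_mulVec, Matrix.mul_nonsing_inv (B k) (hBk k)] using h2
  set s : ℝ := ∑ i, u i ^ 2 with hs_def
  have hs : 0 < s := by
    obtain ⟨i, hi⟩ := Function.ne_iff.mp hu0
    exact Finset.sum_pos' (fun j _ => sq_nonneg _)
      ⟨i, Finset.mem_univ i, lt_of_le_of_ne (sq_nonneg _) (Ne.symm (pow_ne_zero 2 hi))⟩
  have hsne : s ≠ 0 := ne_of_gt hs
  have hdot : u ⬝ᵥ u = s := by
    simp [dotProduct, hs_def, sq]
  -- FTC
  have hy : F (x (k + 1)) - F (x k) = Jk *ᵥ u := by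
    have hxk : x k + u = x (k + 1) := by rw [hu]; abel
    rw [← hxk]
    exact ftc_line F J hF hJc (x k) u
  set E := A * (B k - J xs) with hE
  set G := A * (Jk - J xs) with hG
  set c : Fin n → ℝ := A *ᵥ ((Jk - B k) *ᵥ u) with hc
  set e : Fin n → ℝ := E *ᵥ u with he
  set g : Fin n → ℝ := G *ᵥ u with hg
  have hmat : A * (Jk - B k) = G - E := by
    rw [hG, hE, ← Matrix.mul_sub]
    congr 1
    abel
  have hce : c = g - e := by
    rw [hc, hg, he, Matrix.mulVec_mulVec, hmat, Matrix.sub_mulVec]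
  have hci : ∀ i, c i = g i - e i := fun i => by rw [hce]; exact Pi.sub_apply _ _ _
  -- the update identity
  have hupdate : A * (B (k + 1) - J xs) = E + s⁻¹ • vecMulVec c u := by
    have h1 : F (x (k + 1)) - F (x k) - B k *ᵥ u = (Jk - B k) *ᵥ u := by
      rw [hy, Matrix.sub_mulVec]
    rw [hB k, ← hu, h1, hdot, hE, hc]
    rw [add_sub_right_comm, Matrix.mul_add, Matrix.mul_smul, _root_.mul_vecMulVec,
      Matrix.mulVec_mulVec]
  -- Frobenius expansion
  have hei : ∀ i, e i = ∑ j, E i j * u j := fun i => rfl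
  have hexpand : frobNorm (E + s⁻¹ • vecMulVec c u) ^ 2
      = frobNorm E ^ 2 + s⁻¹ * (2 * ∑ i, c i * e i) + s⁻¹ ^ 2 * ((∑ i, c i ^ 2) * s) := by
    rw [frobNorm_sq, frobNorm_sq]
    have hrow : ∀ i, ∑ j, (E + s⁻¹ • vecMulVec c u) i j ^ 2
        = (∑ j, E i j ^ 2) + s⁻¹ * (2 * (c i * e i)) + s⁻¹ ^ 2 * (c i ^ 2 * s) := by
      intro i
      have h1 : ∀ j, (E + s⁻¹ • vecMulVec c u) i j ^ 2
          = E i j ^ 2 + (s⁻¹ * (2 * c i)) * (E i j * u j) + (s⁻¹ ^ 2 * c i ^ 2) * u j ^ 2 := by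
        intro j
        simp only [Matrix.add_apply, Matrix.smul_apply, vecMulVec_apply, smul_eq_mul]
        ring
      rw [Finset.sum_congr rfl fun j _ => h1 j]
      simp only [Finset.sum_add_distrib, ← Finset.mul_sum]
      rw [← hei i, ← hs_def]
      ring
    rw [Finset.sum_congr rfl fun i _ => hrow i]
    simp only [Finset.sum_add_distrib, ← Finset.mul_sum, ← Finset.sum_mul]
  rw [hupdate, hexpand, vnorm_sq, vnorm_sq, ← hs_def]
  have hsum_ce : ∑ i, c i * e i = (∑ i, g i * e i) - ∑ i, e i ^ 2 := by
    rw [← Finset.sum_sub_distrib]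
    exact Finset.sum_congr rfl fun i _ => by rw [hci i]; ring
  have hsum_c2 : ∑ i, c i ^ 2 = (∑ i, g i ^ 2) - 2 * (∑ i, g i * e i) + ∑ i, e i ^ 2 := by
    have h2 : ∀ i, c i ^ 2 = g i ^ 2 - 2 * (g i * e i) + e i ^ 2 := fun i => by
      rw [hci i]; ring
    rw [Finset.sum_congr rfl fun i _ => h2 i, Finset.sum_add_distrib,
      Finset.sum_sub_distrib, ← Finset.mul_sum]
  set σ := frobNorm E with hσ
  set θ := specNorm G with hθ
  have hvu : vnorm u ^ 2 = s := by rw [vnorm_sq]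
  have hvg : vnorm g ≤ θ * vnorm u := vnorm_mulVec_le_spec G u
  have hve : vnorm e ≤ σ * vnorm u := vnorm_mulVec_le_frob E u
  have hP : |∑ i, g i * e i| ≤ vnorm g * vnorm e := dot_abs_le g e
  have hg2 : ∑ i, g i ^ 2 = vnorm g ^ 2 := (vnorm_sq g).symm
  have hσ0 : 0 ≤ σ := frobNorm_nonneg E
  have hθ0 : 0 ≤ θ := specNorm_nonneg G
  have hvg0 : 0 ≤ vnorm g := vnorm_nonneg g
  have hve0 : 0 ≤ vnorm e := vnorm_nonneg e
  have hvu0 : 0 ≤ vnorm u := vnorm_nonneg u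
  have hkey : (∑ i, g i ^ 2) - (∑ i, g i * e i) ≤ (θ ^ 2 + θ * σ) * s := by
    have h1 : vnorm g ^ 2 ≤ θ ^ 2 * s := by
      have h := pow_le_pow_left₀ hvg0 hvg 2
      rwa [mul_pow, hvu] at h
    have h3 : vnorm g * vnorm e ≤ (θ * vnorm u) * (σ * vnorm u) :=
      mul_le_mul hvg hve hve0 (mul_nonneg hθ0 hvu0)
    have h3' : (θ * vnorm u) * (σ * vnorm u) = θ * σ * s := by
      rw [← hvu]; ring
    have h4 : -(∑ i, g i * e i) ≤ θ * σ * s := by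
      have h5 := neg_abs_le (∑ i, g i * e i)
      linarith
    linarith [hg2 ▸ h1]
  have hfin : σ ^ 2 + s⁻¹ * (2 * ∑ i, c i * e i) + s⁻¹ ^ 2 * ((∑ i, c i ^ 2) * s)
      ≤ σ ^ 2 - (∑ i, c i ^ 2) / s + 2 * (σ * θ + θ ^ 2) := by
    have h0 : s⁻¹ ^ 2 * ((∑ i, c i ^ 2) * s) = (∑ i, c i ^ 2) * s⁻¹ := by
      calc s⁻¹ ^ 2 * ((∑ i, c i ^ 2) * s) = (∑ i, c i ^ 2) * (s⁻¹ * (s⁻¹ * s)) := by ring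
      _ = (∑ i, c i ^ 2) * s⁻¹ := by rw [inv_mul_cancel₀ hsne, mul_one]
    have hdiv : (∑ i, c i ^ 2) / s = (∑ i, c i ^ 2) * s⁻¹ := div_eq_mul_inv _ _
    rw [h0, hdiv]
    have hlhs : s⁻¹ * (2 * ∑ i, c i * e i) + (∑ i, c i ^ 2) * s⁻¹ + (∑ i, c i ^ 2) * s⁻¹
        = s⁻¹ * (2 * ((∑ i, g i ^ 2) - ∑ i, g i * e i)) := by
      rw [hsum_ce, hsum_c2]; ring
    have hb : s⁻¹ * (2 * ((∑ i, g i ^ 2) - ∑ i, g i * e i))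
        ≤ s⁻¹ * (2 * ((θ ^ 2 + θ * σ) * s)) :=
      mul_le_mul_of_nonneg_left (by linarith) (by positivity)
    have hval : s⁻¹ * (2 * ((θ ^ 2 + θ * σ) * s)) = 2 * (σ * θ + θ ^ 2) := by
      calc s⁻¹ * (2 * ((θ ^ 2 + θ * σ) * s)) = (s⁻¹ * s) * (2 * (θ ^ 2 + θ * σ)) := by ring
      _ = 2 * (σ * θ + θ ^ 2) := by rw [inv_mul_cancel₀ hsne]; ring
    linarith
  exact hfin
end

section
/- Let x, u ∈ ℝⁿ and J̄ := ∫₀¹ J(x + t u) dt. If M(‖x − x*‖ + ‖x − x* + u‖) ≤ μ, then J̄ is nonsingular and ‖J*(J̄⁻¹ − J*⁻¹)‖ ≤ M(‖x − x*‖ + ‖x − x* + u‖)/(2μ − M(‖x − x*‖ + ‖x − x* + u‖)) ≤ M(‖x − x*‖ + ‖x − x* + u‖)/μ. -/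
open Matrix MeasureTheory

lemma phi_intJac {n : ℕ} (J : (Fin n → ℝ) → Matrix (Fin n) (Fin n) ℝ)
    (hJc : Continuous J) (x u : Fin n → ℝ) :
    Matrix.toEuclideanCLM (𝕜 := ℝ) (intJac J x u) =
      ∫ t in (0:ℝ)..(1:ℝ), Matrix.toEuclideanCLM (𝕜 := ℝ) (J (x + t • u)) := by
  set phi := Matrix.toEuclideanCLM (𝕜 := ℝ) (n := Fin n) with hphi
  have hphic : Continuous phi :=
    (LinearMap.mk (AddHom.mk phi (map_add _)) (map_smul _) :
      Matrix (Fin n) (Fin n) ℝ →ₗ[ℝ] _).continuous_of_finiteDimensional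
  have haff : Continuous fun t : ℝ => x + t • u := by continuity
  have hcont : Continuous fun t : ℝ => phi (J (x + t • u)) := hphic.comp (hJc.comp haff)
  have hint : IntervalIntegrable (fun t : ℝ => phi (J (x + t • u))) volume 0 1 :=
    hcont.intervalIntegrable _ _
  refine ContinuousLinearMap.ext fun v => ?_
  rw [ContinuousLinearMap.intervalIntegral_apply hint]
  have hcv : Continuous fun t : ℝ => phi (J (x + t • u)) v := hcont.clm_apply continuous_const
  ext i
  have hproj : (∫ t in (0:ℝ)..(1:ℝ), phi (J (x + t • u)) v) i =
      ∫ t in (0:ℝ)..(1:ℝ), phi (J (x + t • u)) v i :=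
    ((EuclideanSpace.proj (𝕜 := ℝ) i).intervalIntegral_comp_comm
      (hcv.intervalIntegrable _ _)).symm
  rw [hproj]
  show (∑ j, intJac J x u i j * v j) = ∫ t in (0:ℝ)..(1:ℝ), phi (J (x + t • u)) v i
  have hap : ∀ t : ℝ, phi (J (x + t • u)) v i = ∑ j, J (x + t • u) i j * v j := fun t => rfl
  simp_rw [hap]
  rw [intervalIntegral.integral_finset_sum]
  · refine Finset.sum_congr rfl fun j _ => ?_
    show (∫ t in (0:ℝ)..1, J (x + t • u) i j) * v j = _
    rw [← intervalIntegral.integral_mul_const]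
  · intro j _
    exact (((continuous_apply j).comp ((continuous_apply i).comp
      (hJc.comp haff))).mul continuous_const).intervalIntegrable _ _

lemma vnorm_eq {n : ℕ} (w : Fin n → ℝ) :
    vnorm w = ‖(WithLp.equiv 2 (Fin n → ℝ)).symm w‖ := by
  rw [EuclideanSpace.norm_eq]
  simp [vnorm, sq_abs]

set_option maxHeartbeats 2000000 in
/-- If `M(‖x − x*‖ + ‖x − x* + u‖) ≤ μ`, then the averaged Jacobian `J̄ = ∫₀¹ J(x + t u) dt`
is nonsingular and
`‖J*(J̄⁻¹ − J*⁻¹)‖ ≤ M(‖x − x*‖ + ‖x − x* + u‖)/(2μ − M(‖x − x*‖ + ‖x − x* + u‖))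
  ≤ M(‖x − x*‖ + ‖x − x* + u‖)/μ`. -/
theorem stmt13 {n : ℕ} (F : (Fin n → ℝ) → (Fin n → ℝ))
    (J : (Fin n → ℝ) → Matrix (Fin n) (Fin n) ℝ)
    (hF : ∀ z, HasFDerivAt F (LinearMap.toContinuousLinearMap ((J z).mulVecLin)) z)
    (hJc : Continuous J)
    (xs : Fin n → ℝ) (hxs : F xs = 0) (hJs : IsUnit (J xs).det)
    (μ : ℝ) (hμ : μ = 1 / specNorm ((J xs)⁻¹))
    (M : ℝ) (hM : 0 ≤ M)
    (hLip : ∀ z, specNorm (J z - J xs) ≤ M * vnorm (z - xs))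
    (x u : Fin n → ℝ)
    (hsmall : M * (vnorm (x - xs) + vnorm (x - xs + u)) ≤ μ) :
    IsUnit (intJac J x u).det ∧
      specNorm (J xs * ((intJac J x u)⁻¹ - (J xs)⁻¹)) ≤
        M * (vnorm (x - xs) + vnorm (x - xs + u))
          / (2 * μ - M * (vnorm (x - xs) + vnorm (x - xs + u))) ∧
      M * (vnorm (x - xs) + vnorm (x - xs + u))
          / (2 * μ - M * (vnorm (x - xs) + vnorm (x - xs + u))) ≤
        M * (vnorm (x - xs) + vnorm (x - xs + u)) / μ := by
  classical
  set phi := Matrix.toEuclideanCLM (𝕜 := ℝ) (n := Fin n) with hphidef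
  set a := vnorm (x - xs) with hadef
  set b := vnorm (x - xs + u) with hbdef
  have ha : 0 ≤ a := Real.sqrt_nonneg _
  have hb : 0 ≤ b := Real.sqrt_nonneg _
  have hδ0 : 0 ≤ M * (a + b) := mul_nonneg hM (by linarith)
  rcases Nat.eq_zero_or_pos n with hn | hn
  · subst hn
    have hva : a = 0 := by simp [hadef, vnorm]
    have hvb : b = 0 := by simp [hbdef, vnorm]
    have hspec : ∀ A : Matrix (Fin 0) (Fin 0) ℝ, specNorm A = 0 := by
      intro A
      have : Matrix.toEuclideanCLM (𝕜 := ℝ) A = 0 := Subsingleton.elim _ _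
      simp only [specNorm, this, norm_zero]
    refine ⟨by simp [Matrix.det_fin_zero], ?_, ?_⟩ <;>
      simp only [hva, hvb, hspec, add_zero, mul_zero, zero_div, sub_zero, le_refl]
  -- main case
  haveI : Nonempty (Fin n) := Fin.pos_iff_nonempty.mp hn
  haveI : Nontrivial (EuclideanSpace ℝ (Fin n)) := by
    refine ⟨0, (WithLp.equiv 2 (Fin n → ℝ)).symm (fun _ => 1), ?_⟩
    intro h
    have := congrArg (fun w => (WithLp.equiv 2 (Fin n → ℝ)) w ⟨0, hn⟩) h
    simpa using this
  set B := phi (J xs) with hBdef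
  set B' := phi ((J xs)⁻¹) with hB'def
  have hBB' : B * B' = 1 := by
    rw [hBdef, hB'def, ← _root_.map_mul, Matrix.mul_nonsing_inv _ hJs, _root_.map_one]
  have hB'B : B' * B = 1 := by
    rw [hBdef, hB'def, ← _root_.map_mul, Matrix.nonsing_inv_mul _ hJs, _root_.map_one]
  have hB'ne : B' ≠ 0 := by
    intro h
    have : (1 : EuclideanSpace ℝ (Fin n) →L[ℝ] EuclideanSpace ℝ (Fin n)) = 0 := by
      rw [← hB'B, h, zero_mul]
    exact one_ne_zero this
  have hB'pos : 0 < ‖B'‖ := norm_pos_iff.mpr hB'ne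
  have hμ' : μ = 1 / ‖B'‖ := hμ
  have hμpos : 0 < μ := by rw [hμ']; positivity
  have hB'norm : ‖B'‖ = 1 / μ := by
    rw [hμ', one_div_one_div]
  set Abar := phi (intJac J x u) with hAdef
  -- step A : ‖Abar - B‖ ≤ M*(a+b)/2
  have hphic : Continuous phi :=
    (LinearMap.mk (AddHom.mk phi (map_add _)) (map_smul _) :
      Matrix (Fin n) (Fin n) ℝ →ₗ[ℝ] _).continuous_of_finiteDimensional
  have haff : Continuous fun t : ℝ => x + t • u :=
    continuous_const.add (continuous_id.smul continuous_const)
  have hcont : Continuous fun t : ℝ => phi (J (x + t • u)) := hphic.comp (hJc.comp haff)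
  have hsubint : IntervalIntegrable (fun t : ℝ => phi (J (x + t • u)) - B) volume 0 1 :=
    (hcont.sub continuous_const).intervalIntegrable _ _
  have hAB : Abar - B = ∫ t in (0:ℝ)..(1:ℝ), (phi (J (x + t • u)) - B) := by
    rw [hAdef, hphidef, phi_intJac J hJc x u,
      intervalIntegral.integral_sub (hcont.intervalIntegrable _ _)
        (intervalIntegrable_const)]
    simp
    rfl
  have hptwise : ∀ t ∈ Set.Ioc (0:ℝ) 1,
      ‖phi (J (x + t • u)) - B‖ ≤ M * ((1 - t) * a + t * b) := by
    intro t ht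
    have h1 : ‖phi (J (x + t • u)) - B‖ = specNorm (J (x + t • u) - J xs) := by
      rw [specNorm, ← map_sub]
    rw [h1]
    refine le_trans (hLip _) ?_
    have hdec : x + t • u - xs = (1 - t) • (x - xs) + t • (x - xs + u) := by
      module
    have : vnorm (x + t • u - xs) ≤ (1 - t) * a + t * b := by
      rw [hdec, vnorm_eq, WithLp.equiv_symm_apply, WithLp.toLp_add, WithLp.toLp_smul,
        WithLp.toLp_smul]
      refine le_trans (norm_add_le _ _) ?_
      rw [norm_smul, norm_smul, hadef, hbdef, vnorm_eq, vnorm_eq, WithLp.equiv_symm_apply]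
      have h1t : ‖(1 - t : ℝ)‖ = 1 - t := Real.norm_of_nonneg (by linarith [ht.2])
      have h2t : ‖(t : ℝ)‖ = t := Real.norm_of_nonneg ht.1.le
      rw [h1t, h2t]
    exact mul_le_mul_of_nonneg_left this hM
  have hgi : IntervalIntegrable (fun t : ℝ => M * ((1 - t) * a + t * b)) volume 0 1 := by
    exact (continuous_const.mul (((continuous_const.sub continuous_id).mul
      continuous_const).add (continuous_id.mul continuous_const))).intervalIntegrable _ _
  have hintval : (∫ t in (0:ℝ)..(1:ℝ), M * ((1 - t) * a + t * b)) = M * (a + b) / 2 := by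
    have heq : (fun t : ℝ => M * ((1 - t) * a + t * b)) =
        fun t : ℝ => M * a + t * (M * (b - a)) := by funext t; ring
    rw [heq, intervalIntegral.integral_add intervalIntegrable_const
      (intervalIntegral.intervalIntegrable_id.mul_const _),
      intervalIntegral.integral_const, intervalIntegral.integral_mul_const,
      integral_id]
    norm_num
    ring
  have hTB : ‖Abar - B‖ ≤ M * (a + b) / 2 := by
    have habs : ‖Abar - B‖ ≤ |∫ t in (0:ℝ)..(1:ℝ), M * ((1 - t) * a + t * b)| := by
      rw [hAB]
      refine intervalIntegral.norm_integral_le_abs_of_norm_le ?_ hgi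
      rw [Set.uIoc_of_le (by norm_num : (0:ℝ) ≤ 1)]
      exact (ae_restrict_iff' measurableSet_Ioc).mpr (ae_of_all _ hptwise)
    rwa [hintval, abs_of_nonneg (by positivity)] at habs
  -- Banach algebra part
  set X := (Abar - B) * B' with hXdef
  have hXnorm : ‖X‖ ≤ M * (a + b) / (2 * μ) := by
    refine le_trans (norm_mul_le _ _) ?_
    rw [hB'norm]
    calc ‖Abar - B‖ * (1 / μ) ≤ (M * (a + b) / 2) * (1 / μ) := by
          exact mul_le_mul_of_nonneg_right hTB (by positivity)
      _ = M * (a + b) / (2 * μ) := by field_simp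
  have hr2 : M * (a + b) / (2 * μ) ≤ 1 / 2 := by
    rw [div_le_div_iff₀ (by positivity) (by norm_num)]
    linarith
  have hXlt : ‖X‖ < 1 := lt_of_le_of_lt (hXnorm.trans hr2) (by norm_num)
  have hXlt' : ‖-X‖ < 1 := by rwa [norm_neg]
  have hone : IsUnit (1 + X) := by
    have := (Units.oneSub (-X) hXlt').isUnit
    rwa [Units.val_oneSub, sub_neg_eq_add] at this
  have hAeq : Abar = (1 + X) * B := by
    rw [hXdef, add_mul, one_mul, mul_assoc, hB'B, mul_one, add_sub_cancel]
  have hBunit : IsUnit B := ((Matrix.isUnit_iff_isUnit_det _).mpr hJs).map _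
  have hAunit : IsUnit Abar := hAeq ▸ hone.mul hBunit
  have hCunit : IsUnit (intJac J x u) := by
    have h2 := hAunit.map (Matrix.toEuclideanCLM (𝕜 := ℝ) (n := Fin n)).symm
    rwa [hAdef, hphidef, StarAlgEquiv.symm_apply_apply] at h2
  have hCdet : IsUnit (intJac J x u).det := (Matrix.isUnit_iff_isUnit_det _).mp hCunit
  refine ⟨hCdet, ?_, ?_⟩
  · -- the main bound
    set C' := phi ((intJac J x u)⁻¹) with hC'def
    have hAC' : Abar * C' = 1 := by
      rw [hAdef, hC'def, ← _root_.map_mul, Matrix.mul_nonsing_inv _ hCdet, _root_.map_one]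
    have hC'A : C' * Abar = 1 := by
      rw [hAdef, hC'def, ← _root_.map_mul, Matrix.nonsing_inv_mul _ hCdet, _root_.map_one]
    set Y := B * C' with hYdef
    have h1 : (1 + X) * Y = 1 := by
      rw [hYdef, ← mul_assoc, ← hAeq, hAC']
    have hYeq : Y = 1 - X * Y := by
      rw [add_mul, one_mul] at h1
      exact eq_sub_of_add_eq h1
    have hr2' : M * (a + b) / (2 * μ) ≤ 1 / 2 := hr2
    have hden : (0:ℝ) < 1 - M * (a + b) / (2 * μ) := by linarith
    have hYnorm : ‖Y‖ ≤ 1 / (1 - M * (a + b) / (2 * μ)) := by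
      have h2 : ‖Y‖ ≤ 1 + (M * (a + b) / (2 * μ)) * ‖Y‖ := by
        calc ‖Y‖ = ‖1 - X * Y‖ := by rw [← hYeq]
          _ ≤ ‖(1 : EuclideanSpace ℝ (Fin n) →L[ℝ] EuclideanSpace ℝ (Fin n))‖ + ‖X * Y‖ :=
              norm_sub_le _ _
          _ ≤ 1 + (M * (a + b) / (2 * μ)) * ‖Y‖ := by
              rw [norm_one]
              exact add_le_add le_rfl (le_trans (norm_mul_le _ _)
                (mul_le_mul_of_nonneg_right hXnorm (norm_nonneg _)))
      rw [le_div_iff₀ hden]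
      nlinarith [norm_nonneg Y]
    have hL : B * (C' - B') = Y - 1 := by
      rw [mul_sub, hBB']
    have hYA : Y * Abar = B := by rw [hYdef, mul_assoc, hC'A, mul_one]
    have hR : Y * (B - Abar) * B' = Y - 1 := by
      calc Y * (B - Abar) * B' = Y * (B * B') - (Y * Abar) * B' := by
            rw [mul_sub, sub_mul, mul_assoc]
        _ = Y - 1 := by rw [hBB', hYA, mul_one, hBB']
    have hfin : specNorm (J xs * ((intJac J x u)⁻¹ - (J xs)⁻¹)) = ‖Y - 1‖ := by
      show ‖phi (J xs * ((intJac J x u)⁻¹ - (J xs)⁻¹))‖ = _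
      rw [_root_.map_mul, map_sub, ← hBdef, ← hB'def, ← hC'def, hL]
    have hBA : ‖B - Abar‖ ≤ M * (a + b) / 2 := by
      rw [norm_sub_rev]; exact hTB
    have hμne : μ ≠ 0 := ne_of_gt hμpos
    have hd2 : (0:ℝ) < 2 * μ - M * (a + b) := by linarith
    calc specNorm (J xs * ((intJac J x u)⁻¹ - (J xs)⁻¹)) = ‖Y - 1‖ := hfin
      _ = ‖Y * (B - Abar) * B'‖ := by rw [hR]
      _ ≤ ‖Y * (B - Abar)‖ * ‖B'‖ := norm_mul_le _ _
      _ ≤ ‖Y‖ * ‖B - Abar‖ * ‖B'‖ :=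
          mul_le_mul_of_nonneg_right (norm_mul_le _ _) (norm_nonneg _)
      _ ≤ (1 / (1 - M * (a + b) / (2 * μ))) * (M * (a + b) / 2) * (1 / μ) := by
          rw [hB'norm]
          gcongr
      _ = M * (a + b) / (2 * μ - M * (a + b)) := by
          field_simp
  · -- last inequality
    gcongr <;> linarith
end
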